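/- Let d ≥ 2 and n ≥ 1. Let w be a real edge-weight function on pairs of vertices from distinct parts of a 2d-partite graph with parts V_1,…,V_d,V'_1,…,V'_d, each identified with [n], let W' be the maximum absolute value of the edge weights, and set M' = 100^{10d}·W'. Let A be the central array in d dimensions of side-length 2n+1 defined by: A[x] = −M' if x_r = 0 for some r ∈ [d]; otherwise A[x] = Σ_{1≤r<t≤d} w(z_r, z_t), where z_r is the (−x_r)-th vertex of V_r if x_r < 0 and the x_r-th vertex of V'_r if x_r > 0. Then the maximum over i ∈ [n]^d and δ ∈ [2n]^d with 0 ≤ δ_r − i_r ≤ n for all r of Σ_{j ∈ B_d} A[−i + δ×j] equals 2^{d−2} times the maximum, over all choices of one vertex from each of the 2d parts, of the 2d-subgraph value. -/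

import Mathlib

private lemma two_pow_eq_real (d : ℕ) (hd : 2 ≤ d) : (2:ℝ)^d = 2^(d-2) * 4 := by
  have h : d - 2 + 2 = d := by omega
  nth_rewrite 1 [← h]
  rw [pow_add]; norm_num

private lemma sum_pair_aux {d : ℕ} (hd : 2 ≤ d) (r t : Fin d) (hrt : r ≠ t)
    (F : Fin 2 → Fin 2 → ℝ) :
    ∑ j : Fin d → Fin 2, F (j r) (j t) = 2 ^ (d - 2) * ∑ a : Fin 2, ∑ b : Fin 2, F a b := by
  set Φ : ((Fin d → Fin 2) × Fin 2 × Fin 2) → ((Fin d → Fin 2) × Fin 2 × Fin 2) :=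
    fun x => (Function.update (Function.update x.1 r x.2.1) t x.2.2, x.1 r, x.1 t) with hΦ
  have hinv : Function.Involutive Φ := by
    rintro ⟨j, a, b⟩
    simp only [hΦ, Prod.mk.injEq]
    refine ⟨?_, ?_, ?_⟩
    · funext x
      by_cases hxt : x = t
      · subst hxt; simp
      · by_cases hxr : x = r
        · subst hxr
          simp [Function.update_of_ne hrt, Function.update_of_ne hxt]
        · simp [Function.update_of_ne hxt, Function.update_of_ne hxr]
    · rw [Function.update_of_ne hrt, Function.update_self]
    · rw [Function.update_self]
  have key := Fintype.sum_bijective Φ hinv.bijective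
      (fun x : (Fin d → Fin 2) × Fin 2 × Fin 2 => F (x.1 r) (x.1 t))
      (fun x : (Fin d → Fin 2) × Fin 2 × Fin 2 => F x.2.1 x.2.2)
      (fun x => rfl)
  rw [Fintype.sum_prod_type, Fintype.sum_prod_type] at key
  have h2 : (Fintype.card (Fin d → Fin 2)) = 2^d := by simp
  simp only [Finset.sum_const, Finset.card_univ, Fintype.card_prod, Fintype.card_fin,
    h2, nsmul_eq_mul, Fintype.sum_prod_type] at key
  push_cast at key
  rw [← Finset.mul_sum] at key
  have hc : (2:ℝ)^d = 2^(d-2) * 4 := two_pow_eq_real d hd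
  rw [hc] at key
  linarith

example : True := trivial

private lemma two_pow_eq_real1 (d : ℕ) (hd : 1 ≤ d) : (2:ℝ)^d = 2^(d-1) * 2 := by
  have h : d - 1 + 1 = d := by omega
  nth_rewrite 1 [← h]
  rw [pow_add]; norm_num

private lemma sum_single_aux {d : ℕ} (hd : 1 ≤ d) (r : Fin d) (F : Fin 2 → ℝ) :
    ∑ j : Fin d → Fin 2, F (j r) = 2 ^ (d - 1) * (F 0 + F 1) := by
  set Φ : ((Fin d → Fin 2) × Fin 2) → ((Fin d → Fin 2) × Fin 2) :=
    fun x => (Function.update x.1 r x.2, x.1 r) with hΦ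
  have hinv : Function.Involutive Φ := by
    rintro ⟨j, a⟩
    simp only [hΦ, Prod.mk.injEq]
    refine ⟨?_, ?_⟩
    · funext x
      by_cases hxr : x = r
      · subst hxr; simp
      · simp [Function.update_of_ne hxr]
    · rw [Function.update_self]
  have key := Fintype.sum_bijective Φ hinv.bijective
      (fun x : (Fin d → Fin 2) × Fin 2 => F (x.1 r))
      (fun x : (Fin d → Fin 2) × Fin 2 => F x.2)
      (fun x => rfl)
  rw [Fintype.sum_prod_type, Fintype.sum_prod_type] at key
  have h2 : (Fintype.card (Fin d → Fin 2)) = 2^d := by simp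
  simp only [Finset.sum_const, Finset.card_univ, Fintype.card_fin, h2, nsmul_eq_mul] at key
  push_cast at key
  rw [← Finset.mul_sum] at key
  have hc : (2:ℝ)^d = 2^(d-1) * 2 := two_pow_eq_real1 d hd
  rw [hc, Fin.sum_univ_two] at key
  linarith

private lemma sum_ne_eq_two_mul {d : ℕ} (H : Fin d → Fin d → ℝ) (hH : ∀ r t, H r t = H t r) :
    ∑ r : Fin d, ∑ t : Fin d, (if r = t then 0 else H r t)
      = 2 * ∑ r : Fin d, ∑ t : Fin d, (if r.val < t.val then H r t else 0) := by
  have split : ∀ r t : Fin d, (if r = t then (0:ℝ) else H r t)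
      = (if r.val < t.val then H r t else 0) + (if t.val < r.val then H r t else 0) := by
    intro r t
    rcases Nat.lt_trichotomy r.val t.val with h | h | h
    · rw [if_neg (by intro he; subst he; omega), if_pos h, if_neg (by omega), add_zero]
    · rw [if_pos (Fin.ext h), if_neg (by omega), if_neg (by omega), add_zero]
    · rw [if_neg (by intro he; subst he; omega), if_neg (by omega), if_pos h, zero_add]
  have e1 : ∑ r : Fin d, ∑ t : Fin d, (if r = t then (0:ℝ) else H r t)
      = (∑ r : Fin d, ∑ t : Fin d, (if r.val < t.val then H r t else 0))
        + ∑ r : Fin d, ∑ t : Fin d, (if t.val < r.val then H r t else 0) := by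
    rw [← Finset.sum_add_distrib]
    refine Finset.sum_congr rfl fun r _ => ?_
    rw [← Finset.sum_add_distrib]
    exact Finset.sum_congr rfl fun t _ => split r t
  have e2 : ∑ r : Fin d, ∑ t : Fin d, (if t.val < r.val then H r t else 0)
      = ∑ r : Fin d, ∑ t : Fin d, (if r.val < t.val then H r t else 0) := by
    rw [Finset.sum_comm]
    refine Finset.sum_congr rfl fun r _ => Finset.sum_congr rfl fun t _ => ?_
    by_cases h : r.val < t.val
    · rw [if_pos h, if_pos h, hH]
    · rw [if_neg h, if_neg h]
  rw [e1, e2]; ring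

private lemma numeric_bound (d : ℕ) (hd : 2 ≤ d) : (3 * d^2 : ℝ) ≤ 100 ^ (10 * d) := by
  have h1 : d < 2 ^ d := Nat.lt_two_pow_self
  have h2 : (3 * d^2 : ℕ) ≤ 100 ^ (10 * d) := by
    have h3 : d^2 < (2^d)^2 := by
      apply Nat.pow_lt_pow_left h1 (by norm_num)
    have h4 : (2^d)^2 = 4^d := by rw [← pow_mul, pow_mul']; norm_num
    have h5 : (4:ℕ)^d ≤ 100^d := Nat.pow_le_pow_left (by norm_num) d
    have h6 : (3:ℕ) ≤ 100 := by norm_num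
    have h7 : (100:ℕ)^d * 100 ≤ 100^(10*d) := by
      calc (100:ℕ)^d * 100 = 100^(d+1) := by rw [pow_succ]
      _ ≤ 100^(10*d) := Nat.pow_le_pow_right (by norm_num) (by omega)
    calc 3 * d^2 ≤ 3 * 4^d := by omega
    _ ≤ 100 * 100^d := by
        have := h5
        nlinarith
    _ = 100^d * 100 := by ring
    _ ≤ 100^(10*d) := h7
  calc (3 * d^2 : ℝ) = ((3 * d^2 : ℕ) : ℝ) := by push_cast; ring
  _ ≤ ((100 ^ (10*d) : ℕ) : ℝ) := by exact_mod_cast h2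
  _ = 100^(10*d) := by push_cast; ring

private lemma fin2cases (a : Fin 2) : a = 0 ∨ a = 1 := by fin_cases a <;> simp

private def pairSum {d : ℕ} (w : (Fin d ⊕ Fin d) → ℤ → (Fin d ⊕ Fin d) → ℤ → ℝ)
    (σ : (Fin d ⊕ Fin d) → ℤ) : ℝ :=
  ∑ r : Fin d, ∑ t : Fin d, ∑ a : Fin 2, ∑ b : Fin 2,
    if r.val < t.val then
      w (if a = 0 then Sum.inl r else Sum.inr r) (σ (if a = 0 then Sum.inl r else Sum.inr r))
        (if b = 0 then Sum.inl t else Sum.inr t) (σ (if b = 0 then Sum.inl t else Sum.inr t))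
    else 0

private lemma val_eq {d : ℕ} (w : (Fin d ⊕ Fin d) → ℤ → (Fin d ⊕ Fin d) → ℤ → ℝ)
    (hwsymm : ∀ p u q v, w p u q v = w q v p u) (σ : (Fin d ⊕ Fin d) → ℤ) :
    (1 / 2 : ℝ) * ∑ p : Fin d ⊕ Fin d, ∑ q : Fin d ⊕ Fin d,
      (if p ≠ q ∧
          ¬ ∃ r : Fin d, (p = Sum.inl r ∧ q = Sum.inr r) ∨ (p = Sum.inr r ∧ q = Sum.inl r)
        then w p (σ p) q (σ q) else 0) = pairSum w σ := by
  set H : Fin d → Fin d → ℝ := fun r t =>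
    w (Sum.inl r) (σ (Sum.inl r)) (Sum.inl t) (σ (Sum.inl t))
    + w (Sum.inl r) (σ (Sum.inl r)) (Sum.inr t) (σ (Sum.inr t))
    + w (Sum.inr r) (σ (Sum.inr r)) (Sum.inl t) (σ (Sum.inl t))
    + w (Sum.inr r) (σ (Sum.inr r)) (Sum.inr t) (σ (Sum.inr t)) with hH
  have hHsymm : ∀ r t, H r t = H t r := by
    intro r t
    simp only [hH]
    rw [hwsymm (Sum.inl r) (σ (Sum.inl r)) (Sum.inl t) (σ (Sum.inl t)),
      hwsymm (Sum.inl r) (σ (Sum.inl r)) (Sum.inr t) (σ (Sum.inr t)),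
      hwsymm (Sum.inr r) (σ (Sum.inr r)) (Sum.inl t) (σ (Sum.inl t)),
      hwsymm (Sum.inr r) (σ (Sum.inr r)) (Sum.inr t) (σ (Sum.inr t))]
    ring
  have step1 : ∑ p : Fin d ⊕ Fin d, ∑ q : Fin d ⊕ Fin d,
      (if p ≠ q ∧
          ¬ ∃ r : Fin d, (p = Sum.inl r ∧ q = Sum.inr r) ∨ (p = Sum.inr r ∧ q = Sum.inl r)
        then w p (σ p) q (σ q) else 0)
      = ∑ r : Fin d, ∑ t : Fin d, (if r = t then 0 else H r t) := by
    rw [Fintype.sum_sum_type]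
    simp only [Fintype.sum_sum_type]
    rw [← Finset.sum_add_distrib]
    refine Finset.sum_congr rfl fun r _ => ?_
    rw [← Finset.sum_add_distrib, ← Finset.sum_add_distrib, ← Finset.sum_add_distrib]
    refine Finset.sum_congr rfl fun t _ => ?_
    by_cases h : r = t
    · subst h; simp [hH]
    · simp [hH, h, Ne.symm h]
      ring
  have step2 : pairSum w σ = ∑ r : Fin d, ∑ t : Fin d, (if r.val < t.val then H r t else 0) := by
    unfold pairSum
    refine Finset.sum_congr rfl fun r _ => Finset.sum_congr rfl fun t _ => ?_
    by_cases h : r.val < t.val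
    · simp only [if_pos h, Fin.sum_univ_two, hH]
      norm_num
      ring
    · simp only [if_neg h]
      simp
  rw [step1, sum_ne_eq_two_mul H hHsymm, ← step2]
  ring

open Classical in
theorem stmt_5 (d n : ℕ) (hd : 2 ≤ d) (hn : 1 ≤ n)
    (w : (Fin d ⊕ Fin d) → ℤ → (Fin d ⊕ Fin d) → ℤ → ℝ)
    (hwsymm : ∀ p u q v, w p u q v = w q v p u)
    (W' M' : ℝ)
    (hW' : IsGreatest {x : ℝ | ∃ (p q : Fin d ⊕ Fin d) (u v : ℤ), p ≠ q ∧
        1 ≤ u ∧ u ≤ (n : ℤ) ∧ 1 ≤ v ∧ v ≤ (n : ℤ) ∧ x = |w p u q v|} W')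
    (hM' : M' = 100 ^ (10 * d) * W')
    (A : (Fin d → ℤ) → ℝ)
    (hA0 : ∀ x : Fin d → ℤ, (∀ r, |x r| ≤ (n : ℤ)) → (∃ r, x r = 0) → A x = -M')
    (hA1 : ∀ x : Fin d → ℤ, (∀ r, |x r| ≤ (n : ℤ)) → (∀ r, x r ≠ 0) →
      A x = ∑ r : Fin d, ∑ t : Fin d, if r.val < t.val then
        w (if x r < 0 then Sum.inl r else Sum.inr r) |x r|
          (if x t < 0 then Sum.inl t else Sum.inr t) |x t| else 0) :
    sSup {x : ℝ | ∃ i δ : Fin d → ℤ,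
        (∀ r, 1 ≤ i r ∧ i r ≤ (n : ℤ)) ∧ (∀ r, 1 ≤ δ r ∧ δ r ≤ 2 * (n : ℤ)) ∧
        (∀ r, 0 ≤ δ r - i r ∧ δ r - i r ≤ (n : ℤ)) ∧
        x = ∑ j : Fin d → Fin 2, A (fun r => -i r + δ r * ((j r).val : ℤ))}
      = 2 ^ (d - 2) * sSup {x : ℝ | ∃ σ : (Fin d ⊕ Fin d) → ℤ,
          (∀ p, 1 ≤ σ p ∧ σ p ≤ (n : ℤ)) ∧
          x = (1 / 2) * ∑ p : Fin d ⊕ Fin d, ∑ q : Fin d ⊕ Fin d,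
            if p ≠ q ∧
                ¬ ∃ r : Fin d, (p = Sum.inl r ∧ q = Sum.inr r) ∨ (p = Sum.inr r ∧ q = Sum.inl r)
            then w p (σ p) q (σ q) else 0} := by
  haveI : NeZero n := ⟨by omega⟩
  have hWub : ∀ (p q : Fin d ⊕ Fin d) (u v : ℤ), p ≠ q → 1 ≤ u → u ≤ (n:ℤ) → 1 ≤ v →
      v ≤ (n:ℤ) → |w p u q v| ≤ W' :=
    fun p q u v h1 h2 h3 h4 h5 => hW'.2 ⟨p, q, u, v, h1, h2, h3, h4, h5, rfl⟩
  have hW0 : 0 ≤ W' := by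
    refine le_trans (abs_nonneg (w (Sum.inl ⟨0, by omega⟩) 1 (Sum.inr ⟨0, by omega⟩) 1)) ?_
    exact hWub _ _ 1 1 (by simp) le_rfl (by exact_mod_cast hn) le_rfl (by exact_mod_cast hn)
  have hM0 : 0 ≤ M' := by rw [hM']; exact mul_nonneg (by positivity) hW0
  -- pointwise bound on pairSum
  have hpair_lb : ∀ σ : (Fin d ⊕ Fin d) → ℤ, (∀ p, 1 ≤ σ p ∧ σ p ≤ (n:ℤ)) →
      -(4 * (d:ℝ)^2 * W') ≤ pairSum w σ := by
    intro σ hσ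
    have hterm : ∀ (r t : Fin d) (a b : Fin 2), -W' ≤ (if r.val < t.val then
        w (if a = 0 then Sum.inl r else Sum.inr r) (σ (if a = 0 then Sum.inl r else Sum.inr r))
          (if b = 0 then Sum.inl t else Sum.inr t) (σ (if b = 0 then Sum.inl t else Sum.inr t))
        else 0) := by
      intro r t a b
      by_cases h : r.val < t.val
      · rw [if_pos h]
        have hrt : r ≠ t := Fin.ne_of_val_ne (Nat.ne_of_lt h)
        have hne : (if a = 0 then Sum.inl r else Sum.inr r)
            ≠ (if b = 0 then Sum.inl t else Sum.inr t) := by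
          split_ifs <;> simp [hrt]
        have hu := hσ (if a = 0 then Sum.inl r else Sum.inr r)
        have hv := hσ (if b = 0 then Sum.inl t else Sum.inr t)
        have hw1 := hWub _ _ _ _ hne hu.1 hu.2 hv.1 hv.2
        have hw2 := neg_abs_le (w (if a = 0 then Sum.inl r else Sum.inr r)
          (σ (if a = 0 then Sum.inl r else Sum.inr r))
          (if b = 0 then Sum.inl t else Sum.inr t)
          (σ (if b = 0 then Sum.inl t else Sum.inr t)))
        linarith
      · rw [if_neg h]; linarith
    have hmain : ∑ r : Fin d, ∑ t : Fin d, ∑ a : Fin 2, ∑ b : Fin 2, (-W') ≤ pairSum w σ := by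
      unfold pairSum
      exact Finset.sum_le_sum fun r _ => Finset.sum_le_sum fun t _ =>
        Finset.sum_le_sum fun a _ => Finset.sum_le_sum fun b _ => hterm r t a b
    have hconst : ∑ r : Fin d, ∑ t : Fin d, ∑ a : Fin 2, ∑ b : Fin 2, (-W')
        = -(4*(d:ℝ)^2*W') := by
      simp [Finset.sum_const, Finset.card_univ]
      ring
    rw [← hconst]
    exact hmain
  -- monotone transfer: good identity
  have good : ∀ i δ : Fin d → ℤ, (∀ r, 1 ≤ i r ∧ i r ≤ (n:ℤ)) →
      (∀ r, 1 ≤ δ r - i r ∧ δ r - i r ≤ (n:ℤ)) →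
      ∑ j : Fin d → Fin 2, A (fun r => -i r + δ r * ((j r).val : ℤ))
        = 2 ^ (d-2) * pairSum w (Sum.elim i (fun r => δ r - i r)) := by
    intro i δ hi hs
    set σ : (Fin d ⊕ Fin d) → ℤ := Sum.elim i (fun r => δ r - i r) with hσdef
    set G : Fin d → Fin d → Fin 2 → Fin 2 → ℝ := fun r t a b =>
      if r.val < t.val then
        w (if a = 0 then Sum.inl r else Sum.inr r) (σ (if a = 0 then Sum.inl r else Sum.inr r))
          (if b = 0 then Sum.inl t else Sum.inr t) (σ (if b = 0 then Sum.inl t else Sum.inr t))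
      else 0 with hG
    have eside : ∀ (s : Fin d) (a : Fin 2),
        (if (-i s + δ s * ((a.val : ℤ))) < 0 then Sum.inl s else Sum.inr s)
          = (if a = 0 then Sum.inl s else Sum.inr s) := by
      intro s a
      have h1 := hi s; have h2 := hs s
      rcases fin2cases a with h | h <;> subst h
      · norm_num
        omega
      · norm_num
        omega
    have eabs : ∀ (s : Fin d) (a : Fin 2),
        |(-i s + δ s * ((a.val : ℤ)))| = σ (if a = 0 then Sum.inl s else Sum.inr s) := by
      intro s a
      have h1 := hi s; have h2 := hs s
      rcases fin2cases a with h | h <;> subst h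
      · have e : -i s + δ s * (((0:Fin 2).val : ℤ)) = -(i s) := by norm_num
        rw [e, abs_neg, abs_of_nonneg (by omega)]
        simp [hσdef]
      · have e : -i s + δ s * (((1:Fin 2).val : ℤ)) = δ s - i s := by rw [show (((1:Fin 2).val : ℤ)) = 1 by rfl]; ring
        rw [e, abs_of_nonneg (by omega)]
        simp [hσdef]
    have hxabs : ∀ (j : Fin d → Fin 2) (r : Fin d),
        |(-i r + δ r * (((j r).val : ℤ)))| ≤ (n:ℤ) := by
      intro j r
      have h1 := hi r; have h2 := hs r
      rcases fin2cases (j r) with h | h <;> rw [h]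
      · have e : -i r + δ r * (((0:Fin 2).val : ℤ)) = -(i r) := by norm_num
        rw [e, abs_neg, abs_of_nonneg (by omega)]
        omega
      · have e : -i r + δ r * (((1:Fin 2).val : ℤ)) = δ r - i r := by rw [show (((1:Fin 2).val : ℤ)) = 1 by rfl]; ring
        rw [e, abs_of_nonneg (by omega)]
        omega
    have hxne : ∀ (j : Fin d → Fin 2) (r : Fin d),
        (-i r + δ r * (((j r).val : ℤ))) ≠ 0 := by
      intro j r
      have h1 := hi r; have h2 := hs r
      rcases fin2cases (j r) with h | h <;> rw [h]
      · have e : -i r + δ r * (((0:Fin 2).val : ℤ)) = -(i r) := by norm_num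
        rw [e]; omega
      · have e : -i r + δ r * (((1:Fin 2).val : ℤ)) = δ r - i r := by rw [show (((1:Fin 2).val : ℤ)) = 1 by rfl]; ring
        rw [e]; omega
    have hstep : ∀ j : Fin d → Fin 2, A (fun r => -i r + δ r * ((j r).val : ℤ))
        = ∑ r : Fin d, ∑ t : Fin d, G r t (j r) (j t) := by
      intro j
      rw [hA1 _ (fun r => hxabs j r) (fun r => hxne j r)]
      refine Finset.sum_congr rfl fun r _ => Finset.sum_congr rfl fun t _ => ?_
      simp only [hG]
      by_cases hrt : r.val < t.val
      · rw [if_pos hrt, if_pos hrt, eside r (j r), eside t (j t), eabs r (j r), eabs t (j t)]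
      · rw [if_neg hrt, if_neg hrt]
    calc ∑ j : Fin d → Fin 2, A (fun r => -i r + δ r * ((j r).val : ℤ))
        = ∑ j : Fin d → Fin 2, ∑ r : Fin d, ∑ t : Fin d, G r t (j r) (j t) :=
          Finset.sum_congr rfl fun j _ => hstep j
      _ = ∑ r : Fin d, ∑ t : Fin d, ∑ j : Fin d → Fin 2, G r t (j r) (j t) := by
          rw [Finset.sum_comm]
          exact Finset.sum_congr rfl fun r _ => Finset.sum_comm
      _ = ∑ r : Fin d, ∑ t : Fin d, 2^(d-2) * ∑ a : Fin 2, ∑ b : Fin 2, G r t a b := by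
          refine Finset.sum_congr rfl fun r _ => Finset.sum_congr rfl fun t _ => ?_
          by_cases hrt : r.val < t.val
          · exact sum_pair_aux hd r t (Fin.ne_of_val_ne (Nat.ne_of_lt hrt)) (G r t)
          · have hz : ∀ a b : Fin 2, G r t a b = 0 := by
              intro a b
              simp only [hG]
              exact if_neg hrt
            simp [hz]
      _ = 2^(d-2) * pairSum w σ := by
          unfold pairSum
          rw [Finset.mul_sum]
          refine Finset.sum_congr rfl fun r _ => ?_
          rw [Finset.mul_sum]
  -- upper bound on A
  have hAub : ∀ x : Fin d → ℤ, (∀ r, |x r| ≤ (n:ℤ)) → A x ≤ (d:ℝ)^2 * W' := by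
    intro x hx
    by_cases h : ∀ r, x r ≠ 0
    · rw [hA1 x hx h]
      have hterm : ∀ r t : Fin d, (if r.val < t.val then
          w (if x r < 0 then Sum.inl r else Sum.inr r) |x r|
            (if x t < 0 then Sum.inl t else Sum.inr t) |x t| else 0) ≤ W' := by
        intro r t
        by_cases hrt : r.val < t.val
        · rw [if_pos hrt]
          have hrtne : r ≠ t := Fin.ne_of_val_ne (Nat.ne_of_lt hrt)
          have hne : (if x r < 0 then Sum.inl r else Sum.inr r)
              ≠ (if x t < 0 then Sum.inl t else Sum.inr t) := by
            split_ifs <;> simp [hrtne]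
          have h1 : 1 ≤ |x r| := Int.one_le_abs (h r)
          have h2 : 1 ≤ |x t| := Int.one_le_abs (h t)
          exact le_trans (le_abs_self _) (hWub _ _ _ _ hne h1 (hx r) h2 (hx t))
        · rw [if_neg hrt]; exact hW0
      calc ∑ r : Fin d, ∑ t : Fin d, (if r.val < t.val then
            w (if x r < 0 then Sum.inl r else Sum.inr r) |x r|
              (if x t < 0 then Sum.inl t else Sum.inr t) |x t| else 0)
          ≤ ∑ _r : Fin d, ∑ _t : Fin d, W' :=
            Finset.sum_le_sum fun r _ => Finset.sum_le_sum fun t _ => hterm r t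
        _ = (d:ℝ)^2 * W' := by
            simp [Finset.sum_const, Finset.card_univ]
            ring
    · push_neg at h
      rw [hA0 x hx h]
      have hdw : (0:ℝ) ≤ (d:ℝ)^2 * W' := by positivity
      linarith
  -- bad case bound
  have hbad : ∀ i δ : Fin d → ℤ, (∀ r, 1 ≤ i r ∧ i r ≤ (n:ℤ)) →
      (∀ r, 0 ≤ δ r - i r ∧ δ r - i r ≤ (n:ℤ)) → (∃ r, δ r = i r) →
      ∑ j : Fin d → Fin 2, A (fun r => -i r + δ r * ((j r).val : ℤ))
        ≤ 2 ^ (d-1) * ((d:ℝ)^2 * W' - M') := by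
    rintro i δ hi hs ⟨r0, hr0⟩
    have hxabs : ∀ (j : Fin d → Fin 2) (r : Fin d),
        |(-i r + δ r * (((j r).val : ℤ)))| ≤ (n:ℤ) := by
      intro j r
      have h1 := hi r; have h2 := hs r
      rcases fin2cases (j r) with h | h <;> rw [h]
      · have e : -i r + δ r * (((0:Fin 2).val : ℤ)) = -(i r) := by norm_num
        rw [e, abs_neg, abs_of_nonneg (by omega)]
        omega
      · have e : -i r + δ r * (((1:Fin 2).val : ℤ)) = δ r - i r := by
          rw [show (((1:Fin 2).val : ℤ)) = 1 by rfl]; ring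
        rw [e, abs_of_nonneg (by omega)]
        omega
    calc ∑ j : Fin d → Fin 2, A (fun r => -i r + δ r * ((j r).val : ℤ))
        ≤ ∑ j : Fin d → Fin 2,
            (fun a : Fin 2 => if a = 1 then -M' else (d:ℝ)^2*W') (j r0) := by
          refine Finset.sum_le_sum fun j _ => ?_
          rcases fin2cases (j r0) with h | h <;> rw [h]
          · norm_num
            exact hAub _ (hxabs j)
          · norm_num
            refine le_of_eq (hA0 _ (hxabs j) ⟨r0, ?_⟩)
            show -i r0 + δ r0 * (((j r0).val : ℤ)) = 0
            rw [h, show (((1:Fin 2).val : ℤ)) = 1 by rfl, hr0]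
            ring
      _ = 2 ^ (d-1) * ((d:ℝ)^2 * W' - M') := by
          rw [sum_single_aux (show 1 ≤ d by omega) r0
            (fun a : Fin 2 => if a = 1 then -M' else (d:ℝ)^2*W')]
          norm_num
          ring
  -- the maximizer
  obtain ⟨τs, hτs⟩ := Finite.exists_max
    (fun τ : (Fin d ⊕ Fin d) → Fin n => pairSum w (fun p => ((τ p : ℕ) : ℤ) + 1))
  set σs : (Fin d ⊕ Fin d) → ℤ := fun p => ((τs p : ℕ) : ℤ) + 1 with hσsdef
  have hσs : ∀ p, 1 ≤ σs p ∧ σs p ≤ (n:ℤ) := by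
    intro p
    have := (τs p).isLt
    constructor <;> simp only [hσsdef] <;> omega
  have hσbound : ∀ σ : (Fin d ⊕ Fin d) → ℤ, (∀ p, 1 ≤ σ p ∧ σ p ≤ (n:ℤ)) →
      pairSum w σ ≤ pairSum w σs := by
    intro σ hσ
    have hτ : (fun p => (((fun p => (⟨(σ p - 1).toNat, by have := hσ p; omega⟩ : Fin n)) p : ℕ) : ℤ) + 1) = σ := by
      funext p
      have := hσ p
      simp only
      omega
    have := hτs (fun p => (⟨(σ p - 1).toNat, by have := hσ p; omega⟩ : Fin n))
    simp only at this
    rw [hτ] at this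
    exact this
  have hG2 : IsGreatest {x : ℝ | ∃ σ : (Fin d ⊕ Fin d) → ℤ,
      (∀ p, 1 ≤ σ p ∧ σ p ≤ (n : ℤ)) ∧
      x = (1 / 2) * ∑ p : Fin d ⊕ Fin d, ∑ q : Fin d ⊕ Fin d,
        if p ≠ q ∧
            ¬ ∃ r : Fin d, (p = Sum.inl r ∧ q = Sum.inr r) ∨ (p = Sum.inr r ∧ q = Sum.inl r)
        then w p (σ p) q (σ q) else 0} (pairSum w σs) := by
    constructor
    · exact ⟨σs, hσs, (val_eq w hwsymm σs).symm⟩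
    · rintro x ⟨σ, hσ, rfl⟩
      rw [val_eq w hwsymm σ]
      exact hσbound σ hσ
  have hG1 : IsGreatest {x : ℝ | ∃ i δ : Fin d → ℤ,
      (∀ r, 1 ≤ i r ∧ i r ≤ (n : ℤ)) ∧ (∀ r, 1 ≤ δ r ∧ δ r ≤ 2 * (n : ℤ)) ∧
      (∀ r, 0 ≤ δ r - i r ∧ δ r - i r ≤ (n : ℤ)) ∧
      x = ∑ j : Fin d → Fin 2, A (fun r => -i r + δ r * ((j r).val : ℤ))}
      (2 ^ (d-2) * pairSum w σs) := by
    constructor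
    · refine ⟨(fun r => σs (Sum.inl r)), (fun r => σs (Sum.inl r) + σs (Sum.inr r)),
        fun r => hσs (Sum.inl r), ?_, ?_, ?_⟩
      · intro r
        have h1 := hσs (Sum.inl r); have h2 := hσs (Sum.inr r)
        beta_reduce
        omega
      · intro r
        have h1 := hσs (Sum.inl r); have h2 := hσs (Sum.inr r)
        beta_reduce
        omega
      · have hgood := good (fun r => σs (Sum.inl r))
          (fun r => σs (Sum.inl r) + σs (Sum.inr r))
          (fun r => hσs (Sum.inl r))
          (fun r => by have := hσs (Sum.inr r); beta_reduce; constructor <;> omega)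
        rw [hgood]
        congr 1
        congr 1
        funext p
        cases p with
        | inl r => simp
        | inr r => simp
    · rintro x ⟨i, δ, h1, h2, h3, rfl⟩
      by_cases hne : ∀ r, δ r ≠ i r
      · have h3' : ∀ r, 1 ≤ δ r - i r ∧ δ r - i r ≤ (n:ℤ) := by
          intro r
          have := h3 r; have := hne r
          constructor <;> omega
        rw [good i δ h1 h3']
        refine mul_le_mul_of_nonneg_left ?_ (by positivity)
        refine hσbound _ ?_
        rintro (r | r)
        · exact h1 r
        · exact h3' r
      · push_neg at hne
        have hb := hbad i δ h1 h3 hne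
        have hp : (0:ℝ) < 2^(d-2) := by positivity
        have hkey : 3*(d:ℝ)^2 * W' ≤ M' := by
          rw [hM']
          exact mul_le_mul_of_nonneg_right (numeric_bound d hd) hW0
        have h21 : (2:ℝ)^(d-1) = 2^(d-2)*2 := by
          have h : d - 2 + 1 = d - 1 := by omega
          rw [← h, pow_succ]
        have hlin : 2*((d:ℝ)^2*W' - M') ≤ -(4*(d:ℝ)^2*W') := by nlinarith
        calc ∑ j : Fin d → Fin 2, A (fun r => -i r + δ r * ((j r).val : ℤ))
            ≤ 2 ^ (d-1) * ((d:ℝ)^2 * W' - M') := hb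
          _ = 2^(d-2) * (2*((d:ℝ)^2*W' - M')) := by rw [h21]; ring
          _ ≤ 2^(d-2) * (-(4*(d:ℝ)^2*W')) := mul_le_mul_of_nonneg_left hlin hp.le
          _ ≤ 2^(d-2) * pairSum w σs := mul_le_mul_of_nonneg_left (hpair_lb σs hσs) hp.le
  rw [hG1.csSup_eq, hG2.csSup_eq]
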